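/- The total number of levels over all compositions of n into ones and twos equals (n-1)·F(n-1), where F is the Fibonacci sequence with F(0)=0, F(1)=1. Equivalently, the number of marked compositions of n (compositions of ones and twos with exactly one level marked) is (n-1)F(n-1). -/

import Mathlib

namespace Stmt11Aux

/-- Compositions of `n` into ones and twos. -/
def comps : ℕ → Finset (List ℕ)
  | 0 => {[]}
  | 1 => {[1]}
  | (n+2) => ((comps (n+1)).image (List.cons 1)) ∪ ((comps n).image (List.cons 2))

lemma mem_comps : ∀ (n : ℕ) (l : List ℕ),
    l ∈ comps n ↔ (∀ x ∈ l, x = 1 ∨ x = 2) ∧ l.sum = n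
  | 0, l => by
    simp only [comps, Finset.mem_singleton]
    constructor
    · rintro rfl; simp
    · rintro ⟨h1, h2⟩
      cases l with
      | nil => rfl
      | cons a t =>
        exfalso
        rcases h1 a (by simp) with rfl | rfl <;> simp [List.sum_cons] at h2 <;> omega
  | 1, l => by
    simp only [comps, Finset.mem_singleton]
    constructor
    · rintro rfl; simp
    · rintro ⟨h1, h2⟩
      cases l with
      | nil => simp at h2
      | cons a t =>
        rcases h1 a (by simp) with rfl | rfl
        · have : t.sum = 0 := by simp [List.sum_cons] at h2; omega
          cases t with
          | nil => rfl
          | cons b u =>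
            exfalso
            rcases h1 b (by simp) with rfl | rfl <;> simp [List.sum_cons] at this <;> omega
        · exfalso; simp [List.sum_cons] at h2; omega
  | (n+2), l => by
    simp only [comps, Finset.mem_union, Finset.mem_image]
    constructor
    · rintro (⟨l', hl', rfl⟩ | ⟨l', hl', rfl⟩)
      · obtain ⟨h1, h2⟩ := (mem_comps (n+1) l').1 hl'
        refine ⟨?_, by simp [h2]; omega⟩
        intro x hx
        rcases List.mem_cons.1 hx with rfl | hx
        · left; rfl
        · exact h1 x hx
      · obtain ⟨h1, h2⟩ := (mem_comps n l').1 hl'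
        refine ⟨?_, by simp [h2]; omega⟩
        intro x hx
        rcases List.mem_cons.1 hx with rfl | hx
        · right; rfl
        · exact h1 x hx
    · rintro ⟨h1, h2⟩
      cases l with
      | nil => simp at h2
      | cons a t =>
        rcases h1 a (by simp) with rfl | rfl
        · left
          exact ⟨t, (mem_comps (n+1) t).2 ⟨fun x hx => h1 x (by simp [hx]),
            by simp [List.sum_cons] at h2; omega⟩, rfl⟩
        · right
          exact ⟨t, (mem_comps n t).2 ⟨fun x hx => h1 x (by simp [hx]),
            by simp [List.sum_cons] at h2; omega⟩, rfl⟩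

lemma comps_disj (m k : ℕ) :
    Disjoint ((comps m).image (List.cons 1)) ((comps k).image (List.cons 2)) := by
  rw [Finset.disjoint_left]
  rintro l hl hl'
  simp only [Finset.mem_image] at hl hl'
  obtain ⟨a, _, rfl⟩ := hl
  obtain ⟨b, _, h⟩ := hl'
  simp at h

lemma card_comps : ∀ n, (comps n).card = Nat.fib (n+1)
  | 0 => by simp [comps]
  | 1 => by simp [comps]
  | (n+2) => by
    rw [comps, Finset.card_union_of_disjoint (comps_disj _ _),
      Finset.card_image_of_injective _ (fun a b h => by injection h),
      Finset.card_image_of_injective _ (fun a b h => by injection h),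
      card_comps (n+1), card_comps n]
    have : Nat.fib (n+2+1) = Nat.fib (n+1) + Nat.fib (n+1+1) := Nat.fib_add_two (n := n+1)
    omega

/-- Positions of levels in a list. -/
def lset (l : List ℕ) : Finset ℕ :=
  (Finset.range l.length).filter (fun i => i + 1 < l.length ∧ l[i]? = l[i+1]?)

lemma mem_lset (l : List ℕ) (i : ℕ) :
    i ∈ lset l ↔ i + 1 < l.length ∧ l[i]? = l[i+1]? := by
  simp only [lset, Finset.mem_filter, Finset.mem_range]
  constructor
  · rintro ⟨_, h⟩; exact h
  · rintro ⟨h1, h2⟩; exact ⟨by omega, h1, h2⟩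

lemma card_lset_cons (x : ℕ) (l : List ℕ) :
    (lset (x :: l)).card = (lset l).card + (if l.head? = some x then 1 else 0) := by
  have himg : lset (x :: l) =
      ((lset l).image (· + 1)) ∪ (if l.head? = some x then {0} else ∅) := by
    ext i
    simp only [Finset.mem_union, Finset.mem_image, mem_lset]
    cases i with
    | zero =>
      cases l with
      | nil => simp
      | cons b t =>
        by_cases hb : b = x
        · subst hb
          simp [List.length_cons]
        · simp [hb, List.length_cons, Ne.symm hb]
    | succ j =>
      cases l with
      | nil => simp
      | cons b t =>
        simp only [List.length_cons, List.getElem?_cons_succ]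
        constructor
        · rintro ⟨h1, h2⟩
          left
          exact ⟨j, ⟨by omega, h2⟩, rfl⟩
        · rintro (⟨k, ⟨hk1, hk2⟩, hkj⟩ | h)
          · have : k = j := by omega
            subst this
            exact ⟨by omega, hk2⟩
          · exfalso
            by_cases hb : b = x <;> simp [hb] at h
  rw [himg, Finset.card_union_of_disjoint, Finset.card_image_of_injective _
    (fun a b h => by omega)]
  · by_cases hb : l.head? = some x <;> simp [hb]
  · rw [Finset.disjoint_right]
    intro i hi hi'
    by_cases hb : l.head? = some x <;> simp [hb] at hi
    subst hi
    simp only [Finset.mem_image] at hi'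
    obtain ⟨j, _, hj⟩ := hi'
    omega

/-- Marked compositions. -/
def marked (n : ℕ) : Finset (List ℕ × ℕ) :=
  (comps n).biUnion (fun l => (lset l).image (fun i => (l, i)))

lemma mem_marked (n : ℕ) (p : List ℕ × ℕ) :
    p ∈ marked n ↔ p.1 ∈ comps n ∧ p.2 ∈ lset p.1 := by
  simp only [marked, Finset.mem_biUnion, Finset.mem_image]
  constructor
  · rintro ⟨l, hl, i, hi, rfl⟩; exact ⟨hl, hi⟩
  · rintro ⟨h1, h2⟩; exact ⟨p.1, h1, p.2, h2, rfl⟩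

lemma card_marked (n : ℕ) :
    (marked n).card = ∑ l ∈ comps n, (lset l).card := by
  rw [marked, Finset.card_biUnion]
  · refine Finset.sum_congr rfl fun l _ => ?_
    exact Finset.card_image_of_injective _ (fun a b h => by injection h)
  · intro a _ b _ hab
    rw [Function.onFun, Finset.disjoint_left]
    rintro p hp hp'
    simp only [Finset.mem_image] at hp hp'
    obtain ⟨i, _, rfl⟩ := hp
    obtain ⟨j, _, h⟩ := hp'
    exact hab (congrArg Prod.fst h).symm

-- number of comps of n with head x
lemma head_count (n : ℕ) (x : ℕ) :
    ∑ l ∈ comps n, (if l.head? = some x then 1 else 0) =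
      ((comps n).filter (fun l => l.head? = some x)).card := by
  rw [Finset.card_filter]

lemma comps_head_one : ∀ n, ((comps n).filter (fun l => l.head? = some 1)).card = Nat.fib n
  | 0 => by simp [comps]
  | 1 => by simp [comps]; rfl
  | (n+2) => by
    have : ((comps (n+2)).filter (fun l => l.head? = some 1)) =
        (comps (n+1)).image (List.cons 1) := by
      ext l
      simp only [comps, Finset.mem_filter, Finset.mem_union, Finset.mem_image]
      constructor
      · rintro ⟨(⟨l', hl', rfl⟩ | ⟨l', hl', rfl⟩), h⟩
        · exact ⟨l', hl', rfl⟩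
        · simp at h
      · rintro ⟨l', hl', rfl⟩
        exact ⟨Or.inl ⟨l', hl', rfl⟩, rfl⟩
    rw [this, Finset.card_image_of_injective _ (fun a b h => by injection h),
      card_comps]

lemma comps_head_two : ∀ n, ((comps n).filter (fun l => l.head? = some 2)).card =
    (if n ≤ 1 then 0 else Nat.fib (n-1))
  | 0 => by simp [comps]
  | 1 => by simp [comps]
  | (n+2) => by
    have : ((comps (n+2)).filter (fun l => l.head? = some 2)) =
        (comps n).image (List.cons 2) := by
      ext l
      simp only [comps, Finset.mem_filter, Finset.mem_union, Finset.mem_image]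
      constructor
      · rintro ⟨(⟨l', hl', rfl⟩ | ⟨l', hl', rfl⟩), h⟩
        · simp at h
        · exact ⟨l', hl', rfl⟩
      · rintro ⟨l', hl', rfl⟩
        exact ⟨Or.inr ⟨l', hl', rfl⟩, rfl⟩
    rw [this, Finset.card_image_of_injective _ (fun a b h => by injection h),
      card_comps]
    simp

/-- total number of levels -/
def T (n : ℕ) : ℕ := (marked n).card

lemma T_rec (n : ℕ) : T (n+2) = T (n+1) + T n + Nat.fib (n+1) +
    (if n ≤ 1 then 0 else Nat.fib (n-1)) := by
  rw [T, card_marked]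
  have : (comps (n+2) : Finset (List ℕ)) =
      ((comps (n+1)).image (List.cons 1)) ∪ ((comps n).image (List.cons 2)) := rfl
  rw [this, Finset.sum_union (comps_disj _ _),
    Finset.sum_image (fun a _ b _ h => by injection h),
    Finset.sum_image (fun a _ b _ h => by injection h)]
  simp only [card_lset_cons]
  rw [Finset.sum_add_distrib, Finset.sum_add_distrib,
    head_count, head_count, comps_head_one, comps_head_two,
    T, T, card_marked, card_marked]
  omega

lemma T_eq : ∀ n, T n = (n - 1) * Nat.fib (n - 1)
  | 0 => by simp [T, marked, comps, lset]
  | 1 => by simp [T, marked, comps, lset]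
  | 2 => by
    rw [T_rec, T_eq 1, T_eq 0]
    simp
  | 3 => by
    rw [T_rec, T_eq 2, T_eq 1]
    simp
  | (n+4) => by
    rw [T_rec, T_eq (n+3), T_eq (n+2)]
    rw [if_neg (by omega : ¬ (n+2 ≤ 1))]
    have h3 : Nat.fib (n+3) = Nat.fib (n+1) + Nat.fib (n+2) := Nat.fib_add_two (n := n+1)
    simp only [Nat.add_sub_cancel, show n+3-1 = n+2 from rfl, show n+2-1 = n+1 from rfl,
      show n+4-1 = n+3 from rfl]
    rw [h3]
    ring

end Stmt11Aux

theorem stmt_11 (n : ℕ) (hn : 1 ≤ n) :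
    Nat.card {p : List ℕ × ℕ //
        (∀ x ∈ p.1, x = 1 ∨ x = 2) ∧ p.1.sum = n ∧
        p.2 + 1 < p.1.length ∧ p.1[p.2]? = p.1[p.2 + 1]?} =
      (n - 1) * Nat.fib (n - 1) := by
  have hset : {p : List ℕ × ℕ |
      (∀ x ∈ p.1, x = 1 ∨ x = 2) ∧ p.1.sum = n ∧
        p.2 + 1 < p.1.length ∧ p.1[p.2]? = p.1[p.2 + 1]?} = ↑(Stmt11Aux.marked n) := by
    ext p
    simp only [Set.mem_setOf_eq, Finset.coe_sort_coe, Finset.mem_coe,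
      Stmt11Aux.mem_marked, Stmt11Aux.mem_comps, Stmt11Aux.mem_lset]
    tauto
  have e : {p : List ℕ × ℕ //
      (∀ x ∈ p.1, x = 1 ∨ x = 2) ∧ p.1.sum = n ∧
        p.2 + 1 < p.1.length ∧ p.1[p.2]? = p.1[p.2 + 1]?} ≃
      ↥((Stmt11Aux.marked n : Finset (List ℕ × ℕ)) : Set (List ℕ × ℕ)) :=
    Equiv.setCongr hset
  rw [Nat.card_congr e, Nat.card_coe_set_eq, Set.ncard_coe_finset]
  exact Stmt11Aux.T_eq n
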